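/- Let G be a finite simple graph, 𝒫 a partition of V(G), P_1 ≠ P_2 two parts of 𝒫, and for i = 1, 2 let 𝒬_i ⊆ B_{G/𝒫}(P_i) \ B_{G/𝒫}(P_{3−i}). Let α be a nonnegative integer. Then the number of σ-separators with respect to (P_1, P_2, 𝒬_1, 𝒬_2) with parameter α is at most 4 · |V(G)|^{4α}. -/

import Mathlib

open SimpleGraph

/-- `X` is complete to `Y` in `G`. -/
def IsCompleteTo {V : Type*} (G : SimpleGraph V) (X Y : Set V) : Prop :=
  ∀ x ∈ X, ∀ y ∈ Y, G.Adj x y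

/-- Distinct parts `X`, `Y` are joined by a black edge of the quotient trigraph. -/
def blackAdj {V : Type*} (G : SimpleGraph V) (X Y : Set V) : Prop :=
  X ≠ Y ∧ IsCompleteTo G X Y

/-- `B_{G/Prt}(X)`: the parts of `Prt` joined to `X` by a black edge. -/
def blackNbrs {V : Type*} (G : SimpleGraph V) (Prt : Set (Set V)) (X : Set V) :
    Set (Set V) :=
  {Y ∈ Prt | blackAdj G X Y}

/-- `(𝒪, U)` is a `σ`-separator with respect to `(P₁, P₂, 𝒬₁, 𝒬₂)` with parameter `α`. -/
def IsSigmaSeparator {V : Type*} (G : SimpleGraph V)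
    (P₁ P₂ : Set V) (𝒬₁ 𝒬₂ : Set (Set V)) (α : ℕ)
    (𝒪 : Set (Set V)) (U : Set V) : Prop :=
  𝒪 ⊆ {P₁, P₂} ∪ 𝒬₁ ∪ 𝒬₂ ∧
  U ⊆ ⋃₀ 𝒪 ∧
  (∀ Q ∈ 𝒪, (U ∩ Q).ncard ≤ α) ∧
  ((𝒪 ∩ 𝒬₁).Nonempty →
    insert P₁ 𝒬₁ ⊆ 𝒪 ∧ (U ∩ ⋃₀ 𝒬₁).ncard ≤ α ∧ ∀ Q ∈ 𝒬₁, (U ∩ Q).Nonempty) ∧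
  ((𝒪 ∩ 𝒬₂).Nonempty →
    insert P₂ 𝒬₂ ⊆ 𝒪 ∧ (U ∩ ⋃₀ 𝒬₂).ncard ≤ α ∧ ∀ Q ∈ 𝒬₂, (U ∩ Q).Nonempty) ∧
  (∀ v ∈ U, (U ∩ G.neighborSet v).ncard ≤ α) ∧
  (∀ Q ∈ ({P₁, P₂} ∪ 𝒬₁ ∪ 𝒬₂) \ 𝒪, ∀ Q' ∈ {P₁, P₂} ∪ 𝒬₁ ∪ 𝒬₂,
    blackAdj G Q Q' → Q' ∈ 𝒪 ∧ U ∩ Q' = ∅)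

lemma myChoose_le_pow (n : ℕ) : ∀ k, n.choose k ≤ n ^ k := by
  intro k
  induction k with
  | zero => simp
  | succ k ih =>
    calc n.choose (k+1) ≤ n.choose (k+1) * (k+1) := Nat.le_mul_of_pos_right _ (Nat.succ_pos k)
    _ = n.choose k * (n - k) := Nat.choose_succ_right_eq n k
    _ ≤ n ^ k * n := Nat.mul_le_mul ih (Nat.sub_le n k)
    _ = n ^ (k+1) := (pow_succ n k).symm

lemma mySum_choose_le (n : ℕ) (hn : 2 ≤ n) : ∀ m, 2 ≤ m →
    ∑ k ∈ Finset.range (m+1), n.choose k ≤ n ^ m := by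
  intro m hm
  induction m, hm using Nat.le_induction with
  | base =>
    have h2 : 2 * n.choose 2 = n * (n - 1) := by
      rw [Nat.choose_two_right, Nat.two_mul_div_two_of_even (Nat.even_mul_pred_self n)]
    have hsum : ∑ k ∈ Finset.range 3, n.choose k = 1 + n + n.choose 2 := by
      simp [Finset.sum_range_succ]
    rw [hsum]
    obtain ⟨k, rfl⟩ := Nat.exists_eq_add_of_le hn
    simp only [Nat.add_sub_cancel_left, show 2 + k - 1 = 1 + k by omega] at h2
    nlinarith [h2]
  | succ m hm ih =>
    rw [Finset.sum_range_succ]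
    have h1 : 3 * n.choose (m+1) ≤ n ^ (m+1) := by
      calc 3 * n.choose (m+1) ≤ (m+1) * n.choose (m+1) := by
            apply Nat.mul_le_mul_right; omega
      _ = n.choose (m+1) * (m+1) := Nat.mul_comm _ _
      _ = n.choose m * (n - m) := Nat.choose_succ_right_eq n m
      _ ≤ n ^ m * n := Nat.mul_le_mul (myChoose_le_pow n m) (Nat.sub_le n m)
      _ = n ^ (m+1) := (pow_succ n m).symm
    have h2 : 2 * n ^ m ≤ n ^ (m+1) := by
      calc 2 * n ^ m ≤ n * n ^ m := Nat.mul_le_mul_right _ hn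
      _ = n ^ (m+1) := by ring
    have := ih
    nlinarith [h1, h2, this]

lemma myCard_finsets (V : Type*) [Fintype V] [DecidableEq V] (m : ℕ) :
    (Finset.univ.filter (fun t : Finset V => t.card ≤ m)).card
      = ∑ k ∈ Finset.range (m+1), (Fintype.card V).choose k := by
  have heq : Finset.univ.filter (fun t : Finset V => t.card ≤ m)
      = (Finset.range (m+1)).biUnion (fun k => Finset.powersetCard k Finset.univ) := by
    ext t
    simp [Finset.mem_powersetCard, Nat.lt_succ_iff]
  rw [heq, Finset.card_biUnion]
  · simp [Finset.card_powersetCard]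
  · intro x hx y hy hxy
    rw [Function.onFun, Finset.disjoint_left]
    intro t ht ht'
    rw [Finset.mem_powersetCard] at ht ht'
    exact hxy (ht.2 ▸ ht'.2.symm ▸ rfl)

lemma myCard_sets (V : Type*) [Fintype V] (m : ℕ) :
    Nat.card {U : Set V // U.ncard ≤ m}
      ≤ ∑ k ∈ Finset.range (m+1), (Fintype.card V).choose k := by
  classical
  have hinj : Function.Injective (fun (U : {U : Set V // U.ncard ≤ m}) =>
      (⟨(Set.toFinite (U : Set V)).toFinset, by
          rw [← Set.ncard_eq_toFinset_card]; exact U.2⟩ :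
        {t : Finset V // t.card ≤ m})) := by
    rintro ⟨U, hU⟩ ⟨W, hW⟩ h
    simp only [Subtype.mk.injEq] at h
    ext x
    rw [← (Set.toFinite U).mem_toFinset, ← (Set.toFinite W).mem_toFinset, h]
  calc Nat.card {U : Set V // U.ncard ≤ m}
      ≤ Nat.card {t : Finset V // t.card ≤ m} := Nat.card_le_card_of_injective _ hinj
    _ = (Finset.univ.filter (fun t : Finset V => t.card ≤ m)).card := by
        rw [Nat.card_eq_fintype_card, Fintype.card_subtype]
    _ = _ := myCard_finsets V m

theorem stmt16 {V : Type*} [Fintype V] (G : SimpleGraph V)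
    (Prt : Set (Set V)) (hpart : Setoid.IsPartition Prt)
    (P₁ P₂ : Set V) (hP₁ : P₁ ∈ Prt) (hP₂ : P₂ ∈ Prt) (hP₁₂ : P₁ ≠ P₂)
    (𝒬₁ 𝒬₂ : Set (Set V))
    (h𝒬₁ : 𝒬₁ ⊆ blackNbrs G Prt P₁ \ blackNbrs G Prt P₂)
    (h𝒬₂ : 𝒬₂ ⊆ blackNbrs G Prt P₂ \ blackNbrs G Prt P₁)
    (α : ℕ) :
    {p : Set (Set V) × Set V |
      IsSigmaSeparator G P₁ P₂ 𝒬₁ 𝒬₂ α p.1 p.2}.ncard ≤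
      4 * Fintype.card V ^ (4 * α) := by
  classical
  -- uniqueness of parts
  have huniq : ∀ {A B : Set V}, A ∈ Prt → B ∈ Prt → ∀ {u : V}, u ∈ A → u ∈ B → A = B := by
    intro A B hA hB u huA huB
    obtain ⟨C, _, hC⟩ := hpart.2 u
    rw [hC A ⟨hA, huA⟩, hC B ⟨hB, huB⟩]
  have hBigPrt : ({P₁, P₂} ∪ 𝒬₁ ∪ 𝒬₂ : Set (Set V)) ⊆ Prt := by
    intro Q hQ
    rcases hQ with (hQ | hQ) | hQ
    · rcases hQ with rfl | rfl
      · exact hP₁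
      · exact hP₂
    · exact (h𝒬₁ hQ).1.1
    · exact (h𝒬₂ hQ).1.1
  -- key: a part of the Big family meeting U must be in 𝒪
  have hK : ∀ (𝒪 : Set (Set V)) (U : Set V), IsSigmaSeparator G P₁ P₂ 𝒬₁ 𝒬₂ α 𝒪 U →
      ∀ Q ∈ ({P₁, P₂} ∪ 𝒬₁ ∪ 𝒬₂ : Set (Set V)), (U ∩ Q).Nonempty → Q ∈ 𝒪 := by
    rintro 𝒪 U hsep Q hQ ⟨u, huU, huQ⟩
    obtain ⟨O, hO, huO⟩ := Set.mem_sUnion.mp (hsep.2.1 huU)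
    rwa [huniq (hBigPrt hQ) (hBigPrt (hsep.1 hO)) huQ huO]
  -- the size of U is at most 4α
  have hUcard : ∀ (𝒪 : Set (Set V)) (U : Set V), IsSigmaSeparator G P₁ P₂ 𝒬₁ 𝒬₂ α 𝒪 U →
      U.ncard ≤ 4 * α := by
    intro 𝒪 U hsep
    have hsub : U ⊆ (U ∩ P₁) ∪ (U ∩ P₂) ∪ (U ∩ ⋃₀ 𝒬₁) ∪ (U ∩ ⋃₀ 𝒬₂) := by
      intro u hu
      obtain ⟨O, hO, huO⟩ := Set.mem_sUnion.mp (hsep.2.1 hu)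
      rcases hsep.1 hO with (hO' | hO') | hO'
      · rcases hO' with rfl | rfl
        · exact Or.inl (Or.inl (Or.inl ⟨hu, huO⟩))
        · exact Or.inl (Or.inl (Or.inr ⟨hu, huO⟩))
      · exact Or.inl (Or.inr ⟨hu, O, hO', huO⟩)
      · exact Or.inr ⟨hu, O, hO', huO⟩
    have h1 : (U ∩ P₁).ncard ≤ α := by
      by_cases h : P₁ ∈ 𝒪
      · exact hsep.2.2.1 P₁ h
      · have hemp : U ∩ P₁ = ∅ := by
          rw [← Set.not_nonempty_iff_eq_empty]
          intro hne
          exact h (hK 𝒪 U hsep P₁ (by left; left; left; rfl) hne)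
        simp [hemp]
    have h2 : (U ∩ P₂).ncard ≤ α := by
      by_cases h : P₂ ∈ 𝒪
      · exact hsep.2.2.1 P₂ h
      · have hemp : U ∩ P₂ = ∅ := by
          rw [← Set.not_nonempty_iff_eq_empty]
          intro hne
          exact h (hK 𝒪 U hsep P₂ (by left; left; right; rfl) hne)
        simp [hemp]
    have h3 : (U ∩ ⋃₀ 𝒬₁).ncard ≤ α := by
      by_cases h : (𝒪 ∩ 𝒬₁).Nonempty
      · exact (hsep.2.2.2.1 h).2.1
      · have hemp : U ∩ ⋃₀ 𝒬₁ = ∅ := by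
          rw [← Set.not_nonempty_iff_eq_empty]
          rintro ⟨u, huU, huQ⟩
          obtain ⟨Q, hQ, huQ⟩ := Set.mem_sUnion.mp huQ
          exact h ⟨Q, hK 𝒪 U hsep Q (Or.inl (Or.inr hQ)) ⟨u, huU, huQ⟩, hQ⟩
        simp [hemp]
    have h4 : (U ∩ ⋃₀ 𝒬₂).ncard ≤ α := by
      by_cases h : (𝒪 ∩ 𝒬₂).Nonempty
      · exact (hsep.2.2.2.2.1 h).2.1
      · have hemp : U ∩ ⋃₀ 𝒬₂ = ∅ := by
          rw [← Set.not_nonempty_iff_eq_empty]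
          rintro ⟨u, huU, huQ⟩
          obtain ⟨Q, hQ, huQ⟩ := Set.mem_sUnion.mp huQ
          exact h ⟨Q, hK 𝒪 U hsep Q (Or.inr hQ) ⟨u, huU, huQ⟩, hQ⟩
        simp [hemp]
    calc U.ncard ≤ ((U ∩ P₁) ∪ (U ∩ P₂) ∪ (U ∩ ⋃₀ 𝒬₁) ∪ (U ∩ ⋃₀ 𝒬₂)).ncard :=
          Set.ncard_le_ncard hsub (Set.toFinite _)
      _ ≤ ((U ∩ P₁) ∪ (U ∩ P₂) ∪ (U ∩ ⋃₀ 𝒬₁)).ncard + (U ∩ ⋃₀ 𝒬₂).ncard :=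
          Set.ncard_union_le _ _
      _ ≤ ((U ∩ P₁) ∪ (U ∩ P₂)).ncard + (U ∩ ⋃₀ 𝒬₁).ncard + (U ∩ ⋃₀ 𝒬₂).ncard := by
          gcongr; exact Set.ncard_union_le _ _
      _ ≤ (U ∩ P₁).ncard + (U ∩ P₂).ncard + (U ∩ ⋃₀ 𝒬₁).ncard + (U ∩ ⋃₀ 𝒬₂).ncard := by
          gcongr; exact Set.ncard_union_le _ _
      _ ≤ α + α + α + α := by gcongr
      _ = 4 * α := by ring
  -- 𝒪 is determined by U and which of P₁, P₂ lie in 𝒪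
  have hOsub : ∀ (𝒪 U 𝒪' U'), IsSigmaSeparator G P₁ P₂ 𝒬₁ 𝒬₂ α 𝒪 U →
      IsSigmaSeparator G P₁ P₂ 𝒬₁ 𝒬₂ α 𝒪' U' → U = U' →
      ((P₁ ∈ 𝒪) ↔ (P₁ ∈ 𝒪')) → ((P₂ ∈ 𝒪) ↔ (P₂ ∈ 𝒪')) → 𝒪 ⊆ 𝒪' := by
    intro 𝒪 U 𝒪' U' h h' hU hb1 hb2 Q hQ
    rcases h.1 hQ with (hq | hq) | hq
    · rcases hq with rfl | rfl
      · exact hb1.mp hQ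
      · exact hb2.mp hQ
    · have hne : (U ∩ Q).Nonempty := (h.2.2.2.1 ⟨Q, hQ, hq⟩).2.2 Q hq
      exact hK 𝒪' U' h' Q (Or.inl (Or.inr hq)) (hU ▸ hne)
    · have hne : (U ∩ Q).Nonempty := (h.2.2.2.2.1 ⟨Q, hQ, hq⟩).2.2 Q hq
      exact hK 𝒪' U' h' Q (Or.inr hq) (hU ▸ hne)
  -- |V| ≥ 2
  have hn2 : 2 ≤ Fintype.card V := by
    have hne1 : P₁.Nonempty := by
      rw [Set.nonempty_iff_ne_empty]; rintro rfl; exact hpart.1 hP₁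
    have hne2 : P₂.Nonempty := by
      rw [Set.nonempty_iff_ne_empty]; rintro rfl; exact hpart.1 hP₂
    obtain ⟨x, hx⟩ := hne1
    obtain ⟨y, hy⟩ := hne2
    exact Fintype.one_lt_card_iff.mpr ⟨x, y, fun h => hP₁₂ (huniq hP₁ hP₂ hx (h ▸ hy))⟩
  -- the injection
  set S : Set (Set (Set V) × Set V) :=
    {p : Set (Set V) × Set V | IsSigmaSeparator G P₁ P₂ 𝒬₁ 𝒬₂ α p.1 p.2} with hS
  let f : S → Prop × Prop × {U : Set V // U.ncard ≤ 4 * α} :=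
    fun p => ⟨P₁ ∈ (p : Set (Set V) × Set V).1, P₂ ∈ (p : Set (Set V) × Set V).1,
      ⟨(p : Set (Set V) × Set V).2, hUcard _ _ p.2⟩⟩
  have hinj : Function.Injective f := by
    rintro ⟨⟨𝒪, U⟩, hp⟩ ⟨⟨𝒪', U'⟩, hp'⟩ heq
    simp only [f, Prod.mk.injEq, Subtype.mk.injEq] at heq
    obtain ⟨e1, e2, e3⟩ := heq
    have hb1 : (P₁ ∈ 𝒪) ↔ (P₁ ∈ 𝒪') := by rw [e1]
    have hb2 : (P₂ ∈ 𝒪) ↔ (P₂ ∈ 𝒪') := by rw [e2]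
    have hO : 𝒪 = 𝒪' :=
      Set.Subset.antisymm (hOsub 𝒪 U 𝒪' U' hp hp' e3 hb1 hb2)
        (hOsub 𝒪' U' 𝒪 U hp' hp e3.symm hb1.symm hb2.symm)
    exact Subtype.ext (Prod.ext hO e3)
  have hcard : Nat.card S ≤ 4 * Nat.card {U : Set V // U.ncard ≤ 4 * α} := by
    calc Nat.card S ≤ Nat.card (Prop × Prop × {U : Set V // U.ncard ≤ 4 * α}) :=
          Nat.card_le_card_of_injective f hinj
      _ = 4 * Nat.card {U : Set V // U.ncard ≤ 4 * α} := by
          rw [Nat.card_prod, Nat.card_prod, Nat.card_eq_fintype_card, Fintype.card_prop]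
          ring
  have hsum : Nat.card {U : Set V // U.ncard ≤ 4 * α} ≤ Fintype.card V ^ (4 * α) := by
    refine (myCard_sets V (4 * α)).trans ?_
    rcases Nat.eq_zero_or_pos α with rfl | hα
    · simp
    · exact mySum_choose_le (Fintype.card V) hn2 (4 * α) (by omega)
  calc S.ncard = Nat.card S := (Nat.card_coe_set_eq S).symm
    _ ≤ 4 * Nat.card {U : Set V // U.ncard ≤ 4 * α} := hcard
    _ ≤ 4 * Fintype.card V ^ (4 * α) := by gcongr
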